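/- For every prime p ≥ 5, (-1)^((p-1)/2) * C(p-1, (p-1)/2) ≡ 4^(p-1) (mod p^3). -/

import Mathlib

open Finset

-- generalized ascending factorial
lemma gen_fact (a : ℕ) : ∀ b : ℕ, a.factorial * ∏ i ∈ range b, (a + 1 + i) = (a + b).factorial := by
  intro b
  induction b with
  | zero => simp
  | succ n ih =>
    rw [prod_range_succ, ← mul_assoc, ih]
    have : a + (n+1) = (a + n) + 1 := by omega
    rw [this, Nat.factorial_succ]
    ring

-- odd product
lemma odd_prod : ∀ m : ℕ, (∏ i ∈ range m, (2*i+1)) * (2^m * m.factorial) = (2*m).factorial := by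
  intro m
  induction m with
  | zero => simp
  | succ n ih =>
    rw [prod_range_succ, Nat.factorial_succ]
    have h2 : 2*(n+1) = (2*n+1) + 1 := by omega
    rw [h2, Nat.factorial_succ, Nat.factorial_succ]
    calc (∏ i ∈ range n, (2*i+1)) * (2*n+1) * (2^(n+1) * ((n+1) * n.factorial))
        = ((∏ i ∈ range n, (2*i+1)) * (2^n * n.factorial)) * ((2*n+1) * (2*(n+1))) := by ring
      _ = (2*n).factorial * ((2*n+1) * (2*n+1+1)) := by rw [ih]; ring_nf
      _ = (2*n+1+1) * ((2*n+1) * (2*n).factorial) := by ring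

-- N2 : product of p - odd = 2^m m!
lemma even_prod (m : ℕ) : ∏ i ∈ range m, (2*m+1 - (2*i+1)) = 2^m * m.factorial := by
  have h1 : ∏ i ∈ range m, (2*m+1 - (2*i+1)) = ∏ i ∈ range m, (2*(m-i)) := by
    apply prod_congr rfl; intro i hi; rw [mem_range] at hi; omega
  have h2 : ∏ i ∈ range m, (2*(m-i)) = ∏ i ∈ range m, (fun j => 2*(j+1)) (m-1-i) := by
    apply prod_congr rfl; intro i hi; rw [mem_range] at hi; simp only []; congr 1; omega
  rw [h1, h2, Finset.prod_range_reflect (fun j => 2*(j+1)) m]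
  rw [Finset.prod_mul_distrib, Finset.prod_const, Finset.prod_range_add_one_eq_factorial m,
    Finset.card_range]
-- K1 : choose(2m,m) * ∏ (p - (2i+1)) = 4^m * ∏ (2i+1)
lemma key1 (m : ℕ) :
    (2*m).choose m * ∏ i ∈ range m, (2*m+1 - (2*i+1)) = 4^m * ∏ i ∈ range m, (2*i+1) := by
  have hpos : 0 < m.factorial := Nat.factorial_pos m
  apply Nat.eq_of_mul_eq_mul_right hpos
  rw [even_prod]
  have hc : (2*m).choose m * m.factorial * m.factorial = (2*m).factorial := by
    have := Nat.choose_mul_factorial_mul_factorial (show m ≤ 2*m by omega)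
    have h2 : 2*m - m = m := by omega
    rwa [h2] at this
  calc (2*m).choose m * (2^m * m.factorial) * m.factorial
      = ((2*m).choose m * m.factorial * m.factorial) * 2^m := by ring
    _ = (2*m).factorial * 2^m := by rw [hc]
    _ = ((∏ i ∈ range m, (2*i+1)) * (2^m * m.factorial)) * 2^m := by rw [odd_prod]
    _ = 4^m * (∏ i ∈ range m, (2*i+1)) * m.factorial := by
        rw [show (4:ℕ)^m = 2^m * 2^m by rw [show (4:ℕ) = 2^2 by norm_num, ← pow_mul, ← pow_add]; congr 1; omega]; ring

-- K2 : ∏ (p + (2i+1)) = 4^m * ∏ (2i+1)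
lemma key2 (m : ℕ) :
    (∏ i ∈ range m, (2*m+1 + (2*i+1))) = 4^m * ∏ i ∈ range m, (2*i+1) := by
  have hpos : 0 < m.factorial * 2^m := by positivity
  apply Nat.eq_of_mul_eq_mul_right hpos
  have h1 : ∏ i ∈ range m, (2*m+1 + (2*i+1)) = 2^m * ∏ i ∈ range m, (m + 1 + i) := by
    rw [show (2:ℕ)^m = ∏ _i ∈ range m, 2 by simp, ← Finset.prod_mul_distrib]
    apply prod_congr rfl; intro i hi; omega
  have h4 : (4:ℕ)^m = 2^m * 2^m := by rw [show (4:ℕ) = 2^2 by norm_num, ← pow_mul, ← pow_add]; congr 1; omega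
  calc (∏ i ∈ range m, (2*m+1 + (2*i+1))) * (m.factorial * 2^m)
      = (m.factorial * ∏ i ∈ range m, (m + 1 + i)) * (2^m * 2^m) := by rw [h1]; ring
    _ = (m+m).factorial * (2^m * 2^m) := by rw [gen_fact]
    _ = (2*m).factorial * (2^m * 2^m) := by rw [show m+m = 2*m by omega]
    _ = ((∏ i ∈ range m, (2*i+1)) * (2^m * m.factorial)) * (2^m * 2^m) := by rw [odd_prod]
    _ = (4^m * ∏ i ∈ range m, (2*i+1)) * (m.factorial * 2^m) := by rw [h4]; ring
-- sum of squares formula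
lemma six_sum : ∀ q : ℕ, 6 * ∑ n ∈ range (q+1), n^2 = q*(q+1)*(2*q+1) := by
  intro q
  induction q with
  | zero => simp
  | succ n ih =>
    rw [sum_range_succ, mul_add, ih]
    ring

-- generic parity split
lemma parity_split {M : Type*} [AddCommMonoid M] (f : ℕ → M) (m : ℕ) :
    ∑ n ∈ range (2*m), f n = (∑ i ∈ range m, f (2*i)) + ∑ i ∈ range m, f (2*i+1) := by
  induction m with
  | zero => simp
  | succ n ih =>
    rw [show 2*(n+1) = (2*n+1)+1 by omega, sum_range_succ, sum_range_succ,
      ih, sum_range_succ, sum_range_succ]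
    abel

def ginv (p : ℕ) (n : ℕ) : ZMod p := ((n : ZMod p)⁻¹)^2

lemma odd_inv_sq_sum (p m : ℕ) [hF : Fact p.Prime] (h5 : 5 ≤ p) (hm : p = 2*m+1) :
    ∑ i ∈ range m, ginv p (2*i+1) = 0 := by
  have hp := hF.out
  have hv : ∀ x : ZMod p, ((x.val : ℕ) : ZMod p) = x := fun x => by
    rw [ZMod.natCast_val, ZMod.cast_id]
  -- step 1 : sum over full range of squares is zero
  have hsq : ∑ n ∈ range p, ((n : ZMod p))^2 = 0 := by
    have h6 : 6 * ∑ n ∈ range p, n^2 = p * (2*m*(4*m+1)) := by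
      rw [hm, six_sum]; ring
    have hc : ((6 * ∑ n ∈ range p, n^2 : ℕ) : ZMod p) = 0 := by
      rw [h6, Nat.cast_mul, ZMod.natCast_self, zero_mul]
    push_cast at hc
    have h6ne : (6 : ZMod p) ≠ 0 := by
      intro h
      have : ((6:ℕ) : ZMod p) = 0 := by exact_mod_cast h
      have hd : p ∣ 6 := (ZMod.natCast_eq_zero_iff 6 p).mp this
      have := Nat.le_of_dvd (by norm_num) hd
      interval_cases p
      · norm_num at hd
      · norm_num at hp
    exact (mul_eq_zero.mp hc).resolve_left h6ne
  -- step 2 : sum over full range of inverse squares is zero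
  have hinvsq : ∑ n ∈ range p, ginv p n = 0 := by
    calc ∑ n ∈ range p, ginv p n = ∑ n ∈ range p, ((n : ZMod p))^2 := by
          refine Finset.sum_nbij' (i := fun n => (((n : ZMod p))⁻¹).val)
            (j := fun n => (((n : ZMod p))⁻¹).val) ?_ ?_ ?_ ?_ ?_
          · intro a _; exact mem_range.mpr (ZMod.val_lt _)
          · intro a _; exact mem_range.mpr (ZMod.val_lt _)
          · intro a ha; beta_reduce; rw [hv, inv_inv, ZMod.val_cast_of_lt (mem_range.mp ha)]
          · intro a ha; beta_reduce; rw [hv, inv_inv, ZMod.val_cast_of_lt (mem_range.mp ha)]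
          · intro a _; rw [ginv, hv]
      _ = 0 := hsq
  -- step 3 : drop the zero term
  have hdrop : ∑ n ∈ range (2*m), ginv p (n+1) = 0 := by
    have h := Finset.sum_range_succ' (ginv p) (2*m)
    rw [show 2*m+1 = p by omega, hinvsq] at h
    have hg0 : ginv p 0 = 0 := by simp [ginv]
    rw [hg0, add_zero] at h
    exact h.symm
  -- step 4 : halves
  have hhalf : ∑ n ∈ range (2*m), ginv p (n+1) = 2 * ∑ i ∈ range m, ginv p (i+1) := by
    rw [show 2*m = m + m by omega, Finset.sum_range_add]
    have hsecond : ∑ i ∈ range m, ginv p (m + i + 1) = ∑ i ∈ range m, ginv p (i+1) := by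
      have h1 : ∀ i ∈ range m, ginv p (m + i + 1) = ginv p (m - i) := by
        intro i hi
        rw [mem_range] at hi
        have hnat : (m + i + 1) + (m - i) = p := by omega
        have hadd : ((m + i + 1 : ℕ) : ZMod p) + ((m - i : ℕ) : ZMod p) = 0 := by
          rw [← Nat.cast_add, hnat]; exact ZMod.natCast_self p
        have hneg := eq_neg_of_add_eq_zero_left hadd
        rw [ginv, ginv, hneg, inv_neg, neg_sq]
      rw [Finset.sum_congr rfl h1]
      have h2 : ∀ i ∈ range m, ginv p (m - i) = (fun j => ginv p (j+1)) (m - 1 - i) := by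
        intro i hi; rw [mem_range] at hi; simp only []; congr 1; omega
      rw [Finset.sum_congr rfl h2, Finset.sum_range_reflect (fun j => ginv p (j+1)) m]
    rw [hsecond, two_mul]
  have hH : ∑ i ∈ range m, ginv p (i+1) = 0 := by
    have h2ne : (2 : ZMod p) ≠ 0 := by
      intro h
      have : ((2:ℕ) : ZMod p) = 0 := by exact_mod_cast h
      have hd : p ∣ 2 := (ZMod.natCast_eq_zero_iff 2 p).mp this
      have := Nat.le_of_dvd (by norm_num) hd
      omega
    have h := hdrop.symm.trans hhalf
    exact (mul_eq_zero.mp h.symm).resolve_left h2ne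
  -- step 5 : even part vanishes, hence odd part vanishes
  have hsplit := parity_split (fun n => ginv p (n+1)) m
  rw [hdrop] at hsplit
  have heven : ∑ i ∈ range m, ginv p (2*i+1+1) = (4:ZMod p)⁻¹ * ∑ i ∈ range m, ginv p (i+1) := by
    rw [Finset.mul_sum]
    apply Finset.sum_congr rfl
    intro i _
    rw [ginv, ginv]
    have hc : ((2*i+1+1 : ℕ) : ZMod p) = 2 * ((i+1 : ℕ) : ZMod p) := by push_cast; ring
    rw [hc, mul_inv, mul_pow, inv_pow]
    norm_num
  rw [heven, hH, mul_zero, add_zero] at hsplit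
  exact hsplit.symm
-- product expansion with nilpotent t
lemma prod_one_sub {R : Type*} [CommRing R] (t : R) (ht : t * t = 0) (f : ℕ → R) (n : ℕ) :
    ∏ i ∈ range n, (1 - t * f i) = 1 - t * ∑ i ∈ range n, f i := by
  induction n with
  | zero => simp
  | succ k ih =>
    rw [prod_range_succ, ih, sum_range_succ]
    linear_combination ((∑ i ∈ range k, f i) * f k) * ht

theorem morley_congruence (p : ℕ) (hp : p.Prime) (h5 : 5 ≤ p) :
    ((-1 : ℤ) ^ ((p - 1) / 2) * ((p - 1).choose ((p - 1) / 2)) : ℤ)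
      ≡ 4 ^ (p - 1) [ZMOD (p : ℤ) ^ 3] := by
  haveI hF : Fact p.Prime := ⟨hp⟩
  haveI : NeZero (p^3) := ⟨pow_ne_zero 3 hp.ne_zero⟩
  obtain ⟨m, hm⟩ : ∃ m, p = 2*m+1 := by
    obtain ⟨k, hk⟩ := hp.odd_of_ne_two (by omega)
    exact ⟨k, hk⟩
  have hm2 : 2 ≤ m := by omega
  rw [show (p-1)/2 = m by omega, show p - 1 = 2*m by omega]
  -- the ring R = ZMod p^3 and the cast homomorphism down to ZMod p
  set R := ZMod (p^3) with hR
  have hdvd : p ∣ p^3 := dvd_pow_self p (by norm_num)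
  set ψ : R →+* ZMod p := ZMod.castHom hdvd (ZMod p) with hψ
  have hval : ∀ x : R, ((x.val : ℕ) : R) = x := fun x => by
    rw [ZMod.natCast_val, ZMod.cast_id]
  have hψnat : ∀ a : ℕ, ψ ((a : ℕ) : R) = (a : ZMod p) := fun a => map_natCast ψ a
  have hp3 : ((p^3 : ℕ) : R) = 0 := ZMod.natCast_self _
  have hp3' : (p : R)^3 = 0 := by rw [← Nat.cast_pow]; exact hp3
  -- killing lemma
  have kill : ∀ x : R, ψ x = 0 → (p : R)^2 * x = 0 := by
    intro x hx
    have hxv : ψ ((x.val : ℕ) : R) = 0 := by rw [hval]; exact hx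
    rw [hψnat, ZMod.natCast_eq_zero_iff] at hxv
    obtain ⟨c, hc⟩ := hxv
    calc (p : R)^2 * x = (p:R)^2 * ((x.val : ℕ) : R) := by rw [hval]
      _ = (p:R)^2 * ((p * c : ℕ) : R) := by rw [hc]
      _ = ((p^3 : ℕ) : R) * (c : R) := by rw [Nat.cast_mul, Nat.cast_pow]; ring
      _ = 0 := by rw [hp3, zero_mul]
  -- units
  have hcop : ∀ i, i < m → Nat.Coprime (2*i+1) p := by
    intro i hi
    rcases hp.coprime_iff_not_dvd.mpr (fun hdd => by
      have := Nat.le_of_dvd (by omega) hdd; omega : ¬ p ∣ (2*i+1)) with h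
    exact Nat.coprime_comm.mp h
  have hu : ∀ i, i < m → IsUnit (((2*i+1 : ℕ) : R)) := by
    intro i hi
    exact (ZMod.isUnit_iff_coprime (2*i+1) (p^3)).mpr (Nat.Coprime.pow_right 3 (hcop i hi))
  -- casting the two key identities
  have k1 : (2*m).choose m * ∏ i ∈ range m, (p - (2*i+1)) = 4^m * ∏ i ∈ range m, (2*i+1) := by
    rw [hm]; exact key1 m
  have k2 : (∏ i ∈ range m, (p + (2*i+1))) = 4^m * ∏ i ∈ range m, (2*i+1) := by
    rw [hm]; exact key2 m
  have k1R : ((2*m).choose m : R) * ∏ i ∈ range m, ((p:R) - ((2*i+1 : ℕ) : R))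
      = 4^m * ∏ i ∈ range m, ((2*i+1 : ℕ) : R) := by
    have hcast := congrArg (Nat.cast : ℕ → R) k1
    rw [Nat.cast_mul, Nat.cast_mul, Nat.cast_pow, Nat.cast_prod, Nat.cast_prod] at hcast
    rw [Finset.prod_congr rfl (fun i hi => by
      rw [Nat.cast_sub (show 2*i+1 ≤ p by rw [mem_range] at hi; omega)])] at hcast
    rw [Nat.cast_ofNat] at hcast
    exact hcast
  have k2R : (∏ i ∈ range m, ((p:R) + ((2*i+1 : ℕ) : R)))
      = 4^m * ∏ i ∈ range m, ((2*i+1 : ℕ) : R) := by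
    have hcast := congrArg (Nat.cast : ℕ → ZMod (p^3)) k2
    rw [Nat.cast_mul, Nat.cast_pow, Nat.cast_prod, Nat.cast_prod] at hcast
    rw [Finset.prod_congr rfl (fun i hi => by rw [Nat.cast_add])] at hcast
    rw [Nat.cast_ofNat] at hcast
    exact hcast
  -- the sum of inverse squares of odds vanishes after multiplication by p^2
  have hzero : (p:R)^2 * ∑ i ∈ range m, ((((2*i+1 : ℕ) : R))⁻¹)^2 = 0 := by
    apply kill
    rw [map_sum]
    have : ∀ i ∈ range m, ψ (((((2*i+1 : ℕ) : R))⁻¹)^2) = ginv p (2*i+1) := by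
      intro i hi
      rw [mem_range] at hi
      rw [map_pow, ginv]
      congr 1
      have h1 : ((2*i+1 : ℕ) : R) * (((2*i+1 : ℕ) : R))⁻¹ = 1 :=
        ZMod.mul_inv_of_unit _ (hu i hi)
      have h2 := congrArg ψ h1
      rw [map_mul, map_one, hψnat] at h2
      exact eq_inv_of_mul_eq_one_right h2
    rw [Finset.sum_congr rfl this]
    exact odd_inv_sq_sum p m h5 hm
  -- main computation
  have hDS : (∏ i ∈ range m, ((p:R) - ((2*i+1 : ℕ) : R))) * (∏ i ∈ range m, ((p:R) + ((2*i+1 : ℕ) : R)))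
      = ∏ i ∈ range m, ((p:R)^2 - ((2*i+1 : ℕ) : R)^2) := by
    rw [← Finset.prod_mul_distrib]
    exact Finset.prod_congr rfl (fun i _ => by ring)
  have hfac : ∀ i ∈ range m, (p:R)^2 - ((2*i+1 : ℕ) : R)^2
      = (1 - (p:R)^2 * ((((2*i+1 : ℕ) : R))⁻¹)^2) * (-(((2*i+1 : ℕ) : R)^2)) := by
    intro i hi
    rw [mem_range] at hi
    have h1 : ((2*i+1 : ℕ) : R) * (((2*i+1 : ℕ) : R))⁻¹ = 1 :=
      ZMod.mul_inv_of_unit _ (hu i hi)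
    have h2 : ((((2*i+1 : ℕ) : R))⁻¹)^2 * ((2*i+1 : ℕ) : R)^2 = 1 := by
      rw [← mul_pow, mul_comm, h1, one_pow]
    linear_combination (-(p:R)^2) * h2
  have hexp : ∏ i ∈ range m, (1 - (p:R)^2 * ((((2*i+1 : ℕ) : R))⁻¹)^2)
      = 1 - (p:R)^2 * ∑ i ∈ range m, ((((2*i+1 : ℕ) : R))⁻¹)^2 := by
    apply prod_one_sub
    have : (p:R)^2 * (p:R)^2 = (p:R)^3 * (p:R) := by ring
    rw [this, hp3', zero_mul]
  have hsplit : ∏ i ∈ range m, ((p:R)^2 - ((2*i+1 : ℕ) : R)^2)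
      = (-1)^m * (∏ i ∈ range m, ((2*i+1 : ℕ) : R))^2 := by
    rw [Finset.prod_congr rfl hfac, Finset.prod_mul_distrib, hexp, hzero, sub_zero, one_mul]
    rw [Finset.prod_congr rfl (fun i (_ : i ∈ range m) =>
      (show -(((2*i+1 : ℕ) : R)^2) = (-1) * ((2*i+1 : ℕ) : R)^2 by ring)),
      Finset.prod_mul_distrib, Finset.prod_const, Finset.card_range, ← Finset.prod_pow]
  -- cancel (∏ odd)^2
  have hAunit : IsUnit ((∏ i ∈ range m, ((2*i+1 : ℕ) : R))^2) := by
    apply IsUnit.pow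
    rw [← Nat.cast_prod]
    refine (ZMod.isUnit_iff_coprime _ (p^3)).mpr (Nat.Coprime.pow_right 3 ?_)
    apply Nat.Coprime.prod_left
    intro i hi
    exact hcop i (mem_range.mp hi)
  have main : ((-1:R))^m * ((2*m).choose m : R) = 16^m := by
    apply hAunit.mul_right_cancel
    calc ((-1:R))^m * ((2*m).choose m : R) * (∏ i ∈ range m, ((2*i+1 : ℕ) : R))^2
        = ((2*m).choose m : R) * ((-1)^m * (∏ i ∈ range m, ((2*i+1 : ℕ) : R))^2) := by ring
      _ = ((2*m).choose m : R) * ∏ i ∈ range m, ((p:R)^2 - ((2*i+1 : ℕ) : R)^2) := by rw [hsplit]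
      _ = (((2*m).choose m : R) * ∏ i ∈ range m, ((p:R) - ((2*i+1 : ℕ) : R)))
            * ∏ i ∈ range m, ((p:R) + ((2*i+1 : ℕ) : R)) := by rw [← hDS]; ring
      _ = (4^m * ∏ i ∈ range m, ((2*i+1 : ℕ) : R)) * (4^m * ∏ i ∈ range m, ((2*i+1 : ℕ) : R)) := by
            rw [k1R, k2R]
      _ = 16^m * (∏ i ∈ range m, ((2*i+1 : ℕ) : R))^2 := by
            rw [show (16:R)^m = 4^m * 4^m by rw [← mul_pow]; norm_num]; ring
  -- conclude
  have hmod : ((p:ℤ))^3 = ((p^3 : ℕ) : ℤ) := by push_cast; ring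
  rw [hmod, ← ZMod.intCast_eq_intCast_iff]
  push_cast
  rw [show ((4:ZMod (p^3)))^(2*m) = 16^m by rw [pow_mul]; norm_num]
  exact main
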